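/- Let H be a finite simple graph, 𝓕 ⊆ F_3, and H⁺ the constraint digraph of H with respect to 𝓕. For every strong component S of H⁺: (i) S contains a circuit if and only if its dual component S̄ = {(y,x) : (x,y) ∈ S} contains a circuit; and (ii) if S ∩ S̄ ≠ ∅, then S contains a circuit (indeed a circuit (x_0,x_1),(x_1,x_0) of length two). -/

import Mathlib

open SimpleGraph

variable {V : Type*}

/-- A `k`-pattern (a graph on vertex set `Fin k`) occurs in `H` under the ordering `lt`:
there are vertices `v 0 < v 1 < ⋯ < v (k-1)` whose induced ordered subgraph is the pattern. -/
def PatOccurs {k : ℕ} (H : SimpleGraph V) (lt : V → V → Prop)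
    (F : SimpleGraph (Fin k)) : Prop :=
  ∃ v : Fin k → V, (∀ i j : Fin k, i < j → lt (v i) (v j)) ∧
    ∀ i j : Fin k, H.Adj (v i) (v j) ↔ F.Adj i j

/-- The ordering `lt` is `𝓕`-free for `H`: no pattern of `𝓕` occurs under it. -/
def FreeOrder {k : ℕ} (H : SimpleGraph V) (𝓕 : Set (SimpleGraph (Fin k)))
    (lt : V → V → Prop) : Prop :=
  ∀ F ∈ 𝓕, ¬ PatOccurs H lt F

/-- `H` admits an `𝓕`-free linear ordering of its vertices. -/
def HasFreeOrdering {k : ℕ} (H : SimpleGraph V)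
    (𝓕 : Set (SimpleGraph (Fin k))) : Prop :=
  ∃ lt : V → V → Prop, IsStrictTotalOrder V lt ∧ FreeOrder H 𝓕 lt

/-- The triple `(x, y, z)`, in this order, induces the 3-pattern `F` in `H`. -/
def Induces3 (H : SimpleGraph V) (F : SimpleGraph (Fin 3)) (x y z : V) : Prop :=
  x ≠ y ∧ x ≠ z ∧ y ≠ z ∧
    (H.Adj x y ↔ F.Adj 0 1) ∧ (H.Adj x z ↔ F.Adj 0 2) ∧ (H.Adj y z ↔ F.Adj 1 2)

/-- The arc relation of the constraint digraph `H⁺` of `H` with respect to `𝓕 ⊆ F_3`: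
there is an arc from `(x,y)` to `(z,y)` and an arc from `(y,z)` to `(y,x)` whenever
`x, y, z`, ordered `x < y < z`, induce a forbidden pattern of `𝓕`. -/
def Arc (H : SimpleGraph V) (𝓕 : Set (SimpleGraph (Fin 3))) :
    V × V → V × V → Prop := fun p q =>
  ∃ x y z : V, (∃ F ∈ 𝓕, Induces3 H F x y z) ∧
    ((p = (x, y) ∧ q = (z, y)) ∨ (p = (y, z) ∧ q = (y, x)))

/-- `p` and `q` lie in the same strong component of the digraph with arc relation `r`. -/
def SameSCC {α : Type*} (r : α → α → Prop) (p q : α) : Prop :=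
  Relation.ReflTransGen r p q ∧ Relation.ReflTransGen r q p

/-- `S` is a strong component of the constraint digraph `H⁺`. -/
def IsSCCOf (H : SimpleGraph V) (𝓕 : Set (SimpleGraph (Fin 3)))
    (S : Set (V × V)) : Prop :=
  ∃ p : V × V, p.1 ≠ p.2 ∧ S = {q | SameSCC (Arc H 𝓕) p q}

/-- `S` contains a circuit `(x_0,x_1), (x_1,x_2), …, (x_{n-1},x_n), (x_n,x_0)` with `n ≥ 1`. -/
def HasCircuitIn {α : Type*} (S : Set (α × α)) : Prop :=
  ∃ n : ℕ, 1 ≤ n ∧ ∃ x : Fin (n + 1) → α, ∀ i : Fin (n + 1), (x i, x (i + 1)) ∈ S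

/-- Some strong component of the constraint digraph `H⁺` contains a circuit. -/
def HasSCCCircuit (H : SimpleGraph V) (𝓕 : Set (SimpleGraph (Fin 3))) : Prop :=
  ∃ S : Set (V × V), IsSCCOf H 𝓕 S ∧ HasCircuitIn S

/-- `H` has an invertible pair: distinct vertices `x, y` with `(x,y)` and `(y,x)` in the
same strong component of `H⁺`. -/
def InvertiblePair (H : SimpleGraph V) (𝓕 : Set (SimpleGraph (Fin 3))) : Prop :=
  ∃ x y : V, x ≠ y ∧ SameSCC (Arc H 𝓕) (x, y) (y, x)

/-- The 3-pattern `{13}`. -/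
def P13 : SimpleGraph (Fin 3) := fromEdgeSet {s(0, 2)}
/-- The 3-pattern `{12,23}`. -/
def P12_23 : SimpleGraph (Fin 3) := fromEdgeSet {s(0, 1), s(1, 2)}
/-- The 3-pattern `{12,13}`. -/
def P12_13 : SimpleGraph (Fin 3) := fromEdgeSet {s(0, 1), s(0, 2)}
/-- The 3-pattern `{13,23}`. -/
def P13_23 : SimpleGraph (Fin 3) := fromEdgeSet {s(0, 2), s(1, 2)}

/-- `𝓕` is nice. -/
def NicePatterns (𝓕 : Set (SimpleGraph (Fin 3))) : Prop :=
  𝓕 = {P13} ∨ 𝓕 = {P12_23} ∨ 𝓕 = {P13, P13_23} ∨ 𝓕 = {P13, P12_13, P13_23}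

/-- For every strong component `S` of `H⁺`: (i) `S` contains a circuit iff its dual
component `S̄ = {(y,x) : (x,y) ∈ S}` contains a circuit; and (ii) if `S ∩ S̄ ≠ ∅`, then
`S` contains a circuit of length two `(x₀,x₁), (x₁,x₀)`. -/

lemma circuit_rev {α : Type*} (T : Set (α × α)) (h : HasCircuitIn T) :
    HasCircuitIn {p : α × α | (p.2, p.1) ∈ T} := by
  obtain ⟨n, hn, x, hx⟩ := h
  refine ⟨n, hn, fun i => x (-i), fun i => ?_⟩
  have : (-i) = (-(i+1)) + 1 := by rw [neg_add, neg_add_cancel_right]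
  have h2 := hx (-(i+1))
  simp only [Set.mem_setOf_eq]
  rw [this]
  exact h2

lemma mem_ne (H : SimpleGraph V) (𝓕 : Set (SimpleGraph (Fin 3))) (p : V × V)
    (hp : p.1 ≠ p.2) {x y : V} (h : SameSCC (Arc H 𝓕) p (x, y)) : x ≠ y := by
  rcases Relation.ReflTransGen.cases_tail h.1 with heq | ⟨c, _, harc⟩
  · intro hxy; apply hp; rw [← heq]; exact hxy
  · obtain ⟨a, b, c', ⟨F, _, hind⟩, hcase⟩ := harc
    rcases hcase with ⟨_, hq⟩ | ⟨_, hq⟩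
    · have := hind.2.2.1
      intro hxy; apply this
      have h1 : x = c' := congrArg Prod.fst hq
      have h2 : y = b := congrArg Prod.snd hq
      rw [← h2, ← hxy, h1]
    · have := hind.1
      intro hxy; apply this
      have h1 : x = b := congrArg Prod.fst hq
      have h2 : y = a := congrArg Prod.snd hq
      rw [← h2, ← hxy, h1]

theorem stmt_6 [Fintype V] (H : SimpleGraph V) (𝓕 : Set (SimpleGraph (Fin 3)))
    (S : Set (V × V)) (hS : IsSCCOf H 𝓕 S) :
    (HasCircuitIn S ↔ HasCircuitIn {p : V × V | (p.2, p.1) ∈ S}) ∧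
      ((S ∩ {p : V × V | (p.2, p.1) ∈ S}).Nonempty →
        ∃ x₀ x₁ : V, x₀ ≠ x₁ ∧ (x₀, x₁) ∈ S ∧ (x₁, x₀) ∈ S) := by
  obtain ⟨p, hp, rfl⟩ := hS
  constructor
  · constructor
    · exact circuit_rev _
    · intro h
      have := circuit_rev _ h
      simpa using this
  · rintro ⟨⟨x, y⟩, hxy1, hxy2⟩
    simp only [Set.mem_setOf_eq] at hxy1 hxy2
    exact ⟨x, y, mem_ne H 𝓕 p hp hxy1, hxy1, hxy2⟩
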